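/- A ranked tree shape with n leaves, encoded as a matrix D satisfying: D_{ii}=2 for all i; D_{i-1,j} - 1 ≤ D_{ij} ≤ D_{i-1,j} for all i,j; and for each i exactly one j satisfies D_{i-1,j} - D_{ij} = 1; corresponds bijectively to an F-matrix via the cumulative-sum map F_{ij} = Σ_{k=1}^{j} D_{ik}, with inverse D_{ij} = F_{ij} - F_{i,j-1} (with F_{i0} = 0). -/

import Mathlib

/-- `IsFMat n F` says that `F` (indexed from 1) is an F-matrix for ranked tree
shapes with `n` leaves: an `(n-1)×(n-1)` lower-triangular matrix of
non-negative integers satisfying the diagonal, subdiagonal, first-column and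
general difference constraints. Entries outside `{1,…,n-1}²` or above the
diagonal are `0`. -/
def IsFMat (n : ℕ) (F : ℕ → ℕ → ℤ) : Prop :=
  (∀ i j, 0 ≤ F i j) ∧
  (∀ i j, ¬(1 ≤ j ∧ j ≤ i ∧ i ≤ n - 1) → F i j = 0) ∧
  (∀ i, 1 ≤ i → i ≤ n - 1 → F i i = (i : ℤ) + 1) ∧
  (∀ i, 1 ≤ i → i ≤ n - 2 → F (i + 1) i = (i : ℤ)) ∧
  (∀ i, 3 ≤ i → i ≤ n - 1 → max 0 (F (i - 1) 1 - 1) ≤ F i 1 ∧ F i 1 ≤ F (i - 1) 1) ∧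
  (∀ i k, 4 ≤ i → i ≤ n - 1 → 2 ≤ k → k ≤ i - 2 →
    max 0 (F i (k - 1)) ≤ F i k ∧
    F (i - 1) k - 1 ≤ F i k ∧ F i k ≤ F (i - 1) k ∧
    F i (k - 1) + F (i - 1) k - F (i - 1) (k - 1) - 1 ≤ F i k ∧
    F i k ≤ F i (k - 1) + F (i - 1) k - F (i - 1) (k - 1))

/-- `IsDMat n D` says that `D` encodes a ranked tree shape with `n` leaves:
`D i j ∈ {0,1,2}` is the number of branches created at the `(j+1)`-st split
that have not yet bifurcated by the end of interval `i`.  `D` is an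
`(n-1)×(n-1)` lower-triangular matrix (indexed from 1) with `D i i = 2`,
columns decreasing by at most one at each step, and exactly one column
decreasing at each step. -/
def IsDMat (n : ℕ) (D : ℕ → ℕ → ℤ) : Prop :=
  (∀ i j, 0 ≤ D i j ∧ D i j ≤ 2) ∧
  (∀ i j, ¬(1 ≤ j ∧ j ≤ i ∧ i ≤ n - 1) → D i j = 0) ∧
  (∀ i, 1 ≤ i → i ≤ n - 1 → D i i = 2) ∧
  (∀ i j, 2 ≤ i → i ≤ n - 1 → 1 ≤ j → j ≤ i - 1 →
    D (i - 1) j - 1 ≤ D i j ∧ D i j ≤ D (i - 1) j) ∧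
  (∀ i, 2 ≤ i → i ≤ n - 1 → ∃! j, 1 ≤ j ∧ j ≤ i - 1 ∧ D (i - 1) j - D i j = 1)

/-- The cumulative-sum map sending a `D`-matrix to its `F`-matrix,
`F i j = ∑_{k=1}^{j} D i k` (and `0` outside the lower-triangular index range). -/
def cumSum (n : ℕ) (D : ℕ → ℕ → ℤ) : ℕ → ℕ → ℤ := fun i j =>
  if 1 ≤ j ∧ j ≤ i ∧ i ≤ n - 1 then ∑ k ∈ Finset.Icc 1 j, D i k else 0



namespace DFAux

open Finset

/-- telescoping sum over `Icc 1 m`. -/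
lemma telescope (f : ℕ → ℤ) (m : ℕ) :
    ∑ k ∈ Finset.Icc 1 m, (f k - f (k - 1)) = f m - f 0 := by
  induction m with
  | zero => simp
  | succ m ih =>
    rw [Finset.sum_Icc_succ_top (Nat.le_add_left 1 m), ih]
    simp

/-- row sums of a matrix -/
def S (D : ℕ → ℕ → ℤ) (i j : ℕ) : ℤ := ∑ k ∈ Finset.Icc 1 j, D i k

section Dmat

variable {n : ℕ} {D : ℕ → ℕ → ℤ}

/-- the unique decrease column, as an `if` formula -/
lemma dec_col (hD : IsDMat n D) {i : ℕ} (h2 : 2 ≤ i) (hin : i ≤ n - 1) :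
    ∃ j₀, 1 ≤ j₀ ∧ j₀ ≤ i - 1 ∧ ∀ j, 1 ≤ j → j ≤ i - 1 →
      D (i - 1) j - D i j = if j = j₀ then 1 else 0 := by
  obtain ⟨j₀, ⟨hj1, hj2, hj3⟩, huniq⟩ := hD.2.2.2.2 i h2 hin
  refine ⟨j₀, hj1, hj2, fun j hj hj' => ?_⟩
  by_cases h : j = j₀
  · subst h; simp [hj3]
  · simp only [h, if_false]
    have hb := hD.2.2.2.1 i j h2 hin hj hj'
    have : D (i-1) j - D i j ≠ 1 := fun hc => h (huniq j ⟨hj, hj', hc⟩)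
    omega

/-- partial row-sum differences as an `if` formula -/
lemma S_row_diff (hD : IsDMat n D) {i : ℕ} (h2 : 2 ≤ i) (hin : i ≤ n - 1)
    {j₀ : ℕ} (hj₀ : 1 ≤ j₀ ∧ j₀ ≤ i - 1 ∧ ∀ j, 1 ≤ j → j ≤ i - 1 →
      D (i - 1) j - D i j = if j = j₀ then 1 else 0)
    {j : ℕ} (hj : j ≤ i - 1) :
    S D (i - 1) j - S D i j = if j₀ ∈ Finset.Icc 1 j then 1 else 0 := by
  obtain ⟨h1, h2', h3⟩ := hj₀
  rw [S, S, ← Finset.sum_sub_distrib]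
  rw [Finset.sum_congr rfl (fun k hk => ?_), Finset.sum_ite_eq' (Finset.Icc 1 j) j₀ (fun _ => (1:ℤ))]
  simp only [Finset.mem_Icc] at hk
  exact h3 k hk.1 (le_trans hk.2 hj)

lemma S_row_diff_bounds (hD : IsDMat n D) {i : ℕ} (h2 : 2 ≤ i) (hin : i ≤ n - 1)
    {j : ℕ} (hj : j ≤ i - 1) :
    0 ≤ S D (i - 1) j - S D i j ∧ S D (i - 1) j - S D i j ≤ 1 := by
  obtain ⟨j₀, hj₀⟩ := dec_col hD h2 hin
  rw [S_row_diff hD h2 hin ⟨hj₀.1, hj₀.2.1, hj₀.2.2⟩ hj]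
  split <;> omega

lemma S_row_diff_full (hD : IsDMat n D) {i : ℕ} (h2 : 2 ≤ i) (hin : i ≤ n - 1) :
    S D (i - 1) (i - 1) - S D i (i - 1) = 1 := by
  obtain ⟨j₀, hj₀⟩ := dec_col hD h2 hin
  rw [S_row_diff hD h2 hin ⟨hj₀.1, hj₀.2.1, hj₀.2.2⟩ le_rfl]
  simp [Finset.mem_Icc, hj₀.1, hj₀.2.1]

lemma S_diag (hD : IsDMat n D) (i : ℕ) (h1 : 1 ≤ i) : i ≤ n - 1 → S D i i = (i : ℤ) + 1 := by
  induction i, h1 using Nat.le_induction with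
  | base =>
    intro h
    rw [S]
    simp [hD.2.2.1 1 le_rfl h]
  | succ i hi ih =>
    intro h
    have hii : i ≤ n - 1 := le_trans (Nat.le_succ i) h
    have h2 : 2 ≤ i + 1 := by omega
    have hfull := S_row_diff_full hD h2 h
    simp only [Nat.add_sub_cancel] at hfull
    have hdiag : D (i+1) (i+1) = 2 := hD.2.2.1 (i+1) (by omega) h
    have : S D (i+1) (i+1) = S D (i+1) i + D (i+1) (i+1) :=
      Finset.sum_Icc_succ_top (by omega) _
    rw [this, hdiag, ih hii] at *
    push_cast
    omega

lemma S_nonneg (hD : IsDMat n D) (i j : ℕ) : 0 ≤ S D i j :=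
  Finset.sum_nonneg fun k _ => (hD.1 i k).1

lemma S_step (hD : IsDMat n D) (i j : ℕ) (hj : 1 ≤ j) :
    S D i j = S D i (j - 1) + D i j := by
  obtain ⟨m, rfl⟩ : ∃ m, j = m + 1 := ⟨j - 1, by omega⟩
  simpa [S] using Finset.sum_Icc_succ_top (by omega : 1 ≤ m + 1) (D i)

end Dmat
section MapsTo

variable {n : ℕ} {D : ℕ → ℕ → ℤ}

lemma cumSum_pos {i j : ℕ} (h : 1 ≤ j ∧ j ≤ i ∧ i ≤ n - 1) :
    cumSum n D i j = S D i j := by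
  simp [cumSum, S, h]

lemma isFMat_cumSum (hD : IsDMat n D) : IsFMat n (cumSum n D) := by
  refine ⟨?_, ?_, ?_, ?_, ?_, ?_⟩
  · intro i j
    unfold cumSum
    split
    · exact S_nonneg hD i j
    · exact le_rfl
  · intro i j h
    simp [cumSum, h]
  · intro i h1 h2
    rw [cumSum_pos ⟨h1, le_rfl, h2⟩]
    exact S_diag hD i h1 h2
  · intro i h1 h2
    have hin : i + 1 ≤ n - 1 := by omega
    rw [cumSum_pos ⟨h1, by omega, hin⟩]
    have hfull := S_row_diff_full hD (i := i + 1) (by omega) hin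
    simp only [Nat.add_sub_cancel] at hfull
    have hdiag := S_diag hD i h1 (by omega)
    omega
  · intro i h3 hi
    rw [cumSum_pos ⟨le_rfl, by omega, hi⟩, cumSum_pos ⟨le_rfl, by omega, by omega⟩]
    have hb := S_row_diff_bounds hD (i := i) (by omega) hi (j := 1) (by omega)
    have hnn := S_nonneg hD i 1
    constructor
    · exact max_le hnn (by omega)
    · omega
  · intro i k h4 hi hk2 hki
    rw [cumSum_pos ⟨by omega, by omega, hi⟩, cumSum_pos ⟨by omega, by omega, hi⟩,
      cumSum_pos ⟨by omega, by omega, by omega⟩, cumSum_pos ⟨by omega, by omega, by omega⟩]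
    have hs1 : S D i k = S D i (k - 1) + D i k := S_step hD i k (by omega)
    have hs2 : S D (i - 1) k = S D (i - 1) (k - 1) + D (i - 1) k :=
      S_step hD (i - 1) k (by omega)
    have hb1 := S_row_diff_bounds hD (i := i) (by omega) hi (j := k) (by omega)
    have hb2 := S_row_diff_bounds hD (i := i) (by omega) hi (j := k - 1) (by omega)
    have hd1 := (hD.1 i k)
    have hd2 := hD.2.2.2.1 i k (by omega) hi (by omega) (by omega)
    have hnn := S_nonneg hD i k
    refine ⟨max_le hnn (by omega), by omega, by omega, by omega, by omega⟩

end MapsTo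

/-- The difference map, inverse to `cumSum`. -/
def dOf (n : ℕ) (F : ℕ → ℕ → ℤ) : ℕ → ℕ → ℤ := fun i j =>
  if 1 ≤ j ∧ j ≤ i ∧ i ≤ n - 1 then F i j - F i (j - 1) else 0

section Fmat

variable {n : ℕ} {F : ℕ → ℕ → ℤ}

lemma F0 (hF : IsFMat n F) (i : ℕ) : F i 0 = 0 := hF.2.1 i 0 (by omega)

lemma Fsub (hF : IsFMat n F) (i : ℕ) (h2 : 2 ≤ i) (hi : i ≤ n - 1) :
    F i (i - 1) = (i : ℤ) - 1 := by
  have h := hF.2.2.2.1 (i - 1) (by omega) (by omega)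
  have e : i - 1 + 1 = i := by omega
  rw [e] at h
  omega

lemma F21 (hF : IsFMat n F) (hn : 3 ≤ n) : F 2 1 = 1 := by
  have h := hF.2.2.2.1 1 le_rfl (by omega)
  norm_num at h
  exact h

/-- monotonicity along rows: `F i (j-1) ≤ F i j`. -/
lemma dOf_nonneg (hF : IsFMat n F) (i j : ℕ) (hj : 1 ≤ j) (hji : j ≤ i) (hi : i ≤ n - 1) :
    F i (j - 1) ≤ F i j := by
  by_cases h1 : j = 1
  · subst h1
    simpa [F0 hF] using hF.1 i 1
  by_cases h2 : j = i
  · subst h2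
    have e1 := hF.2.2.1 j (by omega) hi
    have e2 := Fsub hF j (by omega) hi
    omega
  by_cases h3 : j ≤ i - 2
  · exact le_trans (le_max_right _ _) (hF.2.2.2.2.2 i j (by omega) hi (by omega) h3).1
  -- j = i - 1
  have hj_eq : j = i - 1 := by omega
  by_cases h4 : i = 3
  · subst h4
    have hj2 : j = 2 := by omega
    subst hj2
    have h21 : F 2 1 = 1 := F21 hF (by omega)
    have h32 : F 3 2 = 2 := by
      have := Fsub hF 3 (by omega) hi; norm_num at this; omega
    have hc := (hF.2.2.2.2.1 3 le_rfl hi).2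
    norm_num at hc ⊢
    omega
  · have hi4 : 4 ≤ i := by omega
    have hg := (hF.2.2.2.2.2 i (i - 2) hi4 hi (by omega) le_rfl).2.2.1
    have e2 := Fsub hF (i - 1) (by omega) (by omega)
    rw [show i - 1 - 1 = i - 2 from by omega] at e2
    have e3 := Fsub hF i (by omega) hi
    rw [hj_eq, show i - 1 - 1 = i - 2 from by omega]
    omega

/-- differences are at most 2. -/
lemma dOf_le_two (hF : IsFMat n F) :
    ∀ i, i ≤ n - 1 → ∀ j, 1 ≤ j → j ≤ i → F i j - F i (j - 1) ≤ 2 := by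
  intro i
  induction i using Nat.strong_induction_on with
  | _ i ih =>
  intro hi j hj hji
  by_cases h2 : j = i
  · subst h2
    by_cases h1 : j = 1
    · subst h1
      have := hF.2.2.1 1 le_rfl hi
      have := F0 hF 1
      norm_num at *
      omega
    · have e1 := hF.2.2.1 j (by omega) hi
      have e2 := Fsub hF j (by omega) hi
      omega
  by_cases h3 : j = i - 1
  · subst h3
    by_cases hc2 : i = 2
    · subst hc2
      have := F21 hF (by omega)
      have := F0 hF 2
      norm_num
      omega
    by_cases hc3 : i = 3
    · subst hc3
      have h32 : F 3 2 = 2 := by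
        have := Fsub hF 3 (by omega) hi; norm_num at this; omega
      have := hF.1 3 1
      norm_num
      omega
    · have hi4 : 4 ≤ i := by omega
      have hg := (hF.2.2.2.2.2 i (i - 2) hi4 hi (by omega) le_rfl).2.1
      have e2 := Fsub hF (i - 1) (by omega) (by omega)
      rw [show i - 1 - 1 = i - 2 from by omega] at e2
      have e3 := Fsub hF i (by omega) hi
      rw [show i - 1 - 1 = i - 2 from by omega]
      omega
  by_cases h1 : j = 1
  · subst h1
    -- 1 ≤ i - 2, so i ≥ 3
    have hi3 : 3 ≤ i := by omega
    have hc := (hF.2.2.2.2.1 i hi3 hi).2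
    have hih := ih (i - 1) (by omega) (by omega) 1 le_rfl (by omega)
    have := F0 hF i
    have := F0 hF (i - 1)
    norm_num at *
    omega
  · -- 2 ≤ j ≤ i - 2
    have hi4 : 4 ≤ i := by omega
    have hg := (hF.2.2.2.2.2 i j hi4 hi (by omega) (by omega)).2.2.2.2
    have hih := ih (i - 1) (by omega) (by omega) j (by omega) (by omega)
    omega

/-- row-to-row difference constraints in `D`-form. -/
lemma dOf_step (hF : IsFMat n F) (i j : ℕ) (h2 : 2 ≤ i) (hi : i ≤ n - 1)
    (hj : 1 ≤ j) (hji : j ≤ i - 1) :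
    (F (i - 1) j - F (i - 1) (j - 1)) - 1 ≤ F i j - F i (j - 1) ∧
      F i j - F i (j - 1) ≤ F (i - 1) j - F (i - 1) (j - 1) := by
  by_cases h3 : j = i - 1
  · subst h3
    by_cases hc2 : i = 2
    · subst hc2
      have h21 := F21 hF (by omega)
      have h11 := hF.2.2.1 1 le_rfl (by omega)
      have h10 := F0 hF 1
      have h20 := F0 hF 2
      norm_num at *
      omega
    by_cases hc3 : i = 3
    · subst hc3
      have h32 : F 3 2 = 2 := by
        have := Fsub hF 3 (by omega) hi; norm_num at this; omega
      have h22 := hF.2.2.1 2 (by omega) (by omega)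
      have h21 := F21 hF (by omega)
      have hc := hF.2.2.2.2.1 3 le_rfl hi
      rw [max_le_iff] at hc
      norm_num at *
      omega
    · have hi4 : 4 ≤ i := by omega
      have hg := hF.2.2.2.2.2 i (i - 2) hi4 hi (by omega) le_rfl
      have hB := hg.2.1
      have hC := hg.2.2.1
      have e2 := Fsub hF (i - 1) (by omega) (by omega)
      rw [show i - 1 - 1 = i - 2 from by omega] at e2
      have e3 := Fsub hF i (by omega) hi
      have e4 := hF.2.2.1 (i - 1) (by omega) (by omega)
      rw [show i - 1 - 1 = i - 2 from by omega]
      omega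
  by_cases h1 : j = 1
  · subst h1
    have hi3 : 3 ≤ i := by omega
    have hc := hF.2.2.2.2.1 i hi3 hi
    rw [max_le_iff] at hc
    have := F0 hF i
    have := F0 hF (i - 1)
    norm_num at *
    omega
  · have hi4 : 4 ≤ i := by omega
    have hg := hF.2.2.2.2.2 i j hi4 hi (by omega) (by omega)
    have hD' := hg.2.2.2.1
    have hE := hg.2.2.2.2
    omega

lemma isDMat_dOf (hF : IsFMat n F) : IsDMat n (dOf n F) := by
  refine ⟨?_, ?_, ?_, ?_, ?_⟩
  · intro i j
    unfold dOf
    split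
    · rename_i h
      exact ⟨by have := dOf_nonneg hF i j h.1 h.2.1 h.2.2; omega,
        dOf_le_two hF i h.2.2 j h.1 h.2.1⟩
    · norm_num
  · intro i j h
    simp [dOf, h]
  · intro i h1 h2
    have hc : 1 ≤ i ∧ i ≤ i ∧ i ≤ n - 1 := ⟨h1, le_rfl, h2⟩
    simp only [dOf, if_pos hc]
    by_cases hi1 : i = 1
    · subst hi1
      have := hF.2.2.1 1 le_rfl h2
      have := F0 hF 1
      norm_num at *
      omega
    · have e1 := hF.2.2.1 i h1 h2
      have e2 := Fsub hF i (by omega) h2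
      omega
  · intro i j h2 hi hj hji
    have hc1 : 1 ≤ j ∧ j ≤ i ∧ i ≤ n - 1 := ⟨hj, by omega, hi⟩
    have hc2 : 1 ≤ j ∧ j ≤ i - 1 ∧ i - 1 ≤ n - 1 := ⟨hj, hji, by omega⟩
    simp only [dOf, if_pos hc1, if_pos hc2]
    exact ⟨by have := (dOf_step hF i j h2 hi hj hji).1; omega,
      (dOf_step hF i j h2 hi hj hji).2⟩
  · intro i h2 hi
    -- the function whose sum telescopes to 1
    have key : ∀ j, 1 ≤ j → j ≤ i - 1 →
        dOf n F (i - 1) j - dOf n F i j =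
          (F (i - 1) j - F i j) - (F (i - 1) (j - 1) - F i (j - 1)) := by
      intro j hj hji
      have hc1 : 1 ≤ j ∧ j ≤ i ∧ i ≤ n - 1 := ⟨hj, by omega, hi⟩
      have hc2 : 1 ≤ j ∧ j ≤ i - 1 ∧ i - 1 ≤ n - 1 := ⟨hj, hji, by omega⟩
      simp only [dOf, if_pos hc1, if_pos hc2]
      ring
    have bounds : ∀ j, 1 ≤ j → j ≤ i - 1 →
        0 ≤ dOf n F (i - 1) j - dOf n F i j ∧ dOf n F (i - 1) j - dOf n F i j ≤ 1 := by
      intro j hj hji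
      rw [key j hj hji]
      have := dOf_step hF i j h2 hi hj hji
      omega
    have hsum : ∑ j ∈ Finset.Icc 1 (i - 1), (dOf n F (i - 1) j - dOf n F i j) = 1 := by
      have e1 := hF.2.2.1 (i - 1) (by omega) (by omega)
      have e2 := Fsub hF i h2 hi
      have e3 := F0 hF (i - 1)
      have e4 := F0 hF i
      calc ∑ j ∈ Finset.Icc 1 (i - 1), (dOf n F (i - 1) j - dOf n F i j)
          = ∑ j ∈ Finset.Icc 1 (i - 1),
              ((F (i - 1) j - F i j) - (F (i - 1) (j - 1) - F i (j - 1))) :=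
            Finset.sum_congr rfl (fun j hjm => by
              rw [Finset.mem_Icc] at hjm
              exact key j hjm.1 hjm.2)
        _ = (F (i - 1) (i - 1) - F i (i - 1)) - (F (i - 1) 0 - F i 0) :=
            telescope (fun j => F (i - 1) j - F i j) (i - 1)
        _ = 1 := by omega
    -- existence
    have hex : ∃ j, 1 ≤ j ∧ j ≤ i - 1 ∧ dOf n F (i - 1) j - dOf n F i j = 1 := by
      by_contra hne
      push_neg at hne
      have : ∑ j ∈ Finset.Icc 1 (i - 1), (dOf n F (i - 1) j - dOf n F i j) = 0 := by
        apply Finset.sum_eq_zero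
        intro j hjm
        rw [Finset.mem_Icc] at hjm
        have hb := bounds j hjm.1 hjm.2
        have := hne j hjm.1 hjm.2
        omega
      omega
    obtain ⟨j₀, hj₀⟩ := hex
    refine ⟨j₀, hj₀, ?_⟩
    intro y hy
    by_contra hne
    have hy₀ : y ∈ Finset.Icc 1 (i - 1) := Finset.mem_Icc.mpr ⟨hy.1, hy.2.1⟩
    have hj₀m : j₀ ∈ (Finset.Icc 1 (i - 1)).erase y :=
      Finset.mem_erase.mpr ⟨fun h => hne h.symm, Finset.mem_Icc.mpr ⟨hj₀.1, hj₀.2.1⟩⟩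
    have h1 : (fun j => dOf n F (i - 1) j - dOf n F i j) y +
        ∑ j ∈ (Finset.Icc 1 (i - 1)).erase y, (dOf n F (i - 1) j - dOf n F i j) =
        ∑ j ∈ Finset.Icc 1 (i - 1), (dOf n F (i - 1) j - dOf n F i j) :=
      Finset.add_sum_erase _ (fun j => dOf n F (i - 1) j - dOf n F i j) hy₀
    simp only at h1
    have h2' : dOf n F (i - 1) j₀ - dOf n F i j₀ ≤
        ∑ j ∈ (Finset.Icc 1 (i - 1)).erase y, (dOf n F (i - 1) j - dOf n F i j) := by
      apply Finset.single_le_sum (fun j hjm => ?_) hj₀m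
      have hjm' := Finset.mem_of_mem_erase hjm
      rw [Finset.mem_Icc] at hjm'
      exact (bounds j hjm'.1 hjm'.2).1
    rw [hsum] at h1
    have hy3 := hy.2.2
    have hj3 := hj₀.2.2
    linarith

lemma cumSum_dOf (hF : IsFMat n F) : cumSum n (dOf n F) = F := by
  funext i j
  unfold cumSum
  split
  · rename_i h
    calc ∑ k ∈ Finset.Icc 1 j, dOf n F i k
        = ∑ k ∈ Finset.Icc 1 j, (F i k - F i (k - 1)) :=
          Finset.sum_congr rfl (fun k hkm => by
            rw [Finset.mem_Icc] at hkm
            have hc : 1 ≤ k ∧ k ≤ i ∧ i ≤ n - 1 := ⟨hkm.1, le_trans hkm.2 h.2.1, h.2.2⟩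
            simp only [dOf, if_pos hc])
      _ = F i j - F i 0 := telescope (F i) j
      _ = F i j := by rw [F0 hF i]; ring
  · rename_i h
    exact (hF.2.1 i j h).symm

end Fmat

section Main

variable {n : ℕ} {D : ℕ → ℕ → ℤ}

lemma cumSum_diff (hD : IsDMat n D) (i j : ℕ) (hj : 1 ≤ j) (hji : j ≤ i) (hi : i ≤ n - 1) :
    D i j = cumSum n D i j - cumSum n D i (j - 1) := by
  rw [cumSum_pos ⟨hj, hji, hi⟩]
  by_cases h1 : j = 1
  · subst h1
    have : cumSum n D i 0 = 0 := by simp [cumSum]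
    rw [this, S]
    simp
  · rw [cumSum_pos ⟨by omega, by omega, hi⟩]
    have := S_step hD i j hj
    omega

end Main


end DFAux

/-- Ranked tree shapes with `n` leaves, encoded as `D`-matrices,
correspond bijectively to F-matrices via the cumulative-sum map
`F i j = ∑_{k=1}^{j} D i k`, whose inverse is given by the difference map
`D i j = F i j - F i (j-1)` (with `F i 0 = 0`). -/
theorem dmat_fmat_bijection (n : ℕ) (hn : 2 ≤ n) :
    Set.BijOn (cumSum n) {D | IsDMat n D} {F | IsFMat n F} ∧
    (∀ D, IsDMat n D → ∀ i j, 1 ≤ j → j ≤ i → i ≤ n - 1 →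
      D i j = cumSum n D i j - cumSum n D i (j - 1)) := by
  constructor
  · refine ⟨fun D hD => DFAux.isFMat_cumSum hD, ?_, ?_⟩
    · intro D1 h1 D2 h2 heq
      funext i j
      by_cases h : 1 ≤ j ∧ j ≤ i ∧ i ≤ n - 1
      · rw [DFAux.cumSum_diff h1 i j h.1 h.2.1 h.2.2, heq]
        exact (DFAux.cumSum_diff h2 i j h.1 h.2.1 h.2.2).symm
      · rw [h1.2.1 i j h, h2.2.1 i j h]
    · intro F hF
      exact ⟨DFAux.dOf n F, DFAux.isDMat_dOf hF, DFAux.cumSum_dOf hF⟩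
  · intro D hD i j hj hji hi
    exact DFAux.cumSum_diff hD i j hj hji hi
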